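/- arXiv:math/0608786 — 8 statements merged into one kernel-verified Lean document; each statement's English description precedes it below -/
import Mathlib

section
/- For every real number x with 0 ≤ x ≤ 1, one has arcsin x ≤ π·x / (2 + (π − 2)·√(1 − x²)). (Equivalently, with b₁ = 2/(π−2), arcsin x ≤ ((π/(π−2))·x)/(2/(π−2) + √(1−x²)).) -/
open Real Set

noncomputable def g0 (x : ℝ) : ℝ := π * Real.sin x - 2*x - (π-2)*x*Real.cos x
noncomputable def g1 (x : ℝ) : ℝ := 2*Real.cos x - 2 + (π-2)*x*Real.sin x
noncomputable def g2 (x : ℝ) : ℝ := (π-4)*Real.sin x + (π-2)*x*Real.cos x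
noncomputable def g3 (x : ℝ) : ℝ := (2*π-6)*Real.cos x - (π-2)*x*Real.sin x
noncomputable def g4 (x : ℝ) : ℝ := -(3*π-8)*Real.sin x - (π-2)*x*Real.cos x

lemma hd0 (x : ℝ) : HasDerivAt g0 (g1 x) x := by
  have h : HasDerivAt g0 _ x := (((Real.hasDerivAt_sin x).const_mul π).sub
      ((hasDerivAt_id x).const_mul (2:ℝ))).sub
      ((((hasDerivAt_id x).const_mul (π-2)).mul (Real.hasDerivAt_cos x)))
  convert h using 1
  simp only [g1, id_eq]
  ring

lemma hd1 (x : ℝ) : HasDerivAt g1 (g2 x) x := by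
  have h : HasDerivAt g1 _ x := (((Real.hasDerivAt_cos x).const_mul (2:ℝ)).sub_const 2).add
      ((((hasDerivAt_id x).const_mul (π-2)).mul (Real.hasDerivAt_sin x)))
  convert h using 1
  simp only [g2, id_eq]
  ring

lemma hd2 (x : ℝ) : HasDerivAt g2 (g3 x) x := by
  have h : HasDerivAt g2 _ x := ((Real.hasDerivAt_sin x).const_mul (π-4)).add
      ((((hasDerivAt_id x).const_mul (π-2)).mul (Real.hasDerivAt_cos x)))
  convert h using 1
  simp only [g3, id_eq]
  ring

lemma hd3 (x : ℝ) : HasDerivAt g3 (g4 x) x := by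
  have h : HasDerivAt g3 _ x := ((Real.hasDerivAt_cos x).const_mul (2*π-6)).sub
      ((((hasDerivAt_id x).const_mul (π-2)).mul (Real.hasDerivAt_sin x)))
  convert h using 1
  simp only [g4, id_eq]
  ring

/-- From a positive-then-negative derivative pattern and endpoint signs,
deduce a positive-then-negative pattern for the function itself. -/
lemma monoanti {a b : ℝ} (f f' : ℝ → ℝ)
    (hd : ∀ x, HasDerivAt f (f' x) x)
    (hp : ∃ c ∈ Icc a b, (∀ x ∈ Icc a c, 0 ≤ f' x) ∧ (∀ x ∈ Ioc c b, f' x ≤ 0)) :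
    ∃ c ∈ Icc a b, MonotoneOn f (Icc a c) ∧ AntitoneOn f (Icc c b) := by
  obtain ⟨c, hc, hpos, hneg⟩ := hp
  have hcont : Continuous f := by
    rw [continuous_iff_continuousAt]
    exact fun x => (hd x).continuousAt
  refine ⟨c, hc, ?_, ?_⟩
  · apply monotoneOn_of_deriv_nonneg (convex_Icc a c) hcont.continuousOn
    · exact fun x hx => (hd x).differentiableAt.differentiableWithinAt
    · intro x hx
      rw [interior_Icc] at hx
      rw [(hd x).deriv]
      exact hpos x ⟨hx.1.le, hx.2.le⟩
  · apply antitoneOn_of_deriv_nonpos (convex_Icc c b) hcont.continuousOn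
    · exact fun x hx => (hd x).differentiableAt.differentiableWithinAt
    · intro x hx
      rw [interior_Icc] at hx
      rw [(hd x).deriv]
      exact hneg x ⟨hx.1, hx.2.le⟩

lemma step {a b : ℝ} (f f' : ℝ → ℝ)
    (hd : ∀ x, HasDerivAt f (f' x) x)
    (hp : ∃ c ∈ Icc a b, (∀ x ∈ Icc a c, 0 ≤ f' x) ∧ (∀ x ∈ Ioc c b, f' x ≤ 0))
    (ha : 0 ≤ f a) (hb : f b ≤ 0) :
    ∃ d ∈ Icc a b, (∀ x ∈ Icc a d, 0 ≤ f x) ∧ (∀ x ∈ Ioc d b, f x ≤ 0) := by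
  obtain ⟨c, hc, hmono, hanti⟩ := monoanti f f' hd hp
  have hcont : Continuous f := by
    rw [continuous_iff_continuousAt]
    exact fun x => (hd x).continuousAt
  have hac : a ≤ c := hc.1
  have hcb : c ≤ b := hc.2
  have hfc : 0 ≤ f c :=
    ha.trans (hmono (left_mem_Icc.2 hac) (right_mem_Icc.2 hac) hac)
  set S : Set ℝ := Icc c b ∩ {x | 0 ≤ f x} with hSdef
  have hcS : c ∈ S := ⟨left_mem_Icc.2 hcb, hfc⟩
  have hScl : IsClosed S := isClosed_Icc.inter (isClosed_le continuous_const hcont)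
  have hScpt : IsCompact S := isCompact_Icc.of_isClosed_subset hScl inter_subset_left
  have hdS : sSup S ∈ S := hScpt.sSup_mem ⟨c, hcS⟩
  set d := sSup S with hddef
  have hcd : c ≤ d := le_csSup hScpt.bddAbove hcS
  refine ⟨d, ⟨hac.trans hcd, hdS.1.2⟩, ?_, ?_⟩
  · intro x hx
    rcases le_total x c with h | h
    · exact ha.trans (hmono (left_mem_Icc.2 hac) ⟨hx.1, h⟩ hx.1)
    · exact hdS.2.trans (hanti ⟨h, hx.2.trans hdS.1.2⟩ hdS.1 hx.2)
  · intro x hx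
    by_contra hcon
    push_neg at hcon
    have hxS : x ∈ S := ⟨⟨hcd.trans hx.1.le, hx.2⟩, hcon.le⟩
    exact absurd (le_csSup hScpt.bddAbove hxS) (not_le.2 hx.1)

lemma bump {a b : ℝ} (f f' : ℝ → ℝ)
    (hd : ∀ x, HasDerivAt f (f' x) x)
    (hp : ∃ c ∈ Icc a b, (∀ x ∈ Icc a c, 0 ≤ f' x) ∧ (∀ x ∈ Ioc c b, f' x ≤ 0))
    (ha : 0 ≤ f a) (hb : 0 ≤ f b) :
    ∀ x ∈ Icc a b, 0 ≤ f x := by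
  obtain ⟨c, hc, hmono, hanti⟩ := monoanti f f' hd hp
  intro x hx
  rcases le_total x c with h | h
  · exact ha.trans (hmono (left_mem_Icc.2 hc.1) ⟨hx.1, h⟩ hx.1)
  · exact hb.trans (hanti ⟨h, hx.2⟩ (right_mem_Icc.2 hc.2) hx.2)

lemma pi_half_nonneg : (0:ℝ) ≤ π/2 := by positivity

lemma g4_pattern : ∃ c ∈ Icc (0:ℝ) (π/2),
    (∀ x ∈ Icc (0:ℝ) c, 0 ≤ g4 x) ∧ (∀ x ∈ Ioc c (π/2), g4 x ≤ 0) := by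
  refine ⟨0, left_mem_Icc.2 pi_half_nonneg, ?_, ?_⟩
  · intro x hx
    have : x = 0 := le_antisymm hx.2 hx.1
    simp [this, g4]
  · intro x hx
    have hs : 0 ≤ Real.sin x := Real.sin_nonneg_of_nonneg_of_le_pi hx.1.le
      (hx.2.trans (by linarith [Real.pi_pos]))
    have hcnn : 0 ≤ Real.cos x := Real.cos_nonneg_of_mem_Icc
      ⟨by linarith [hx.1.le, Real.pi_pos], hx.2⟩
    have hπ := Real.pi_gt_d6
    unfold g4
    nlinarith [mul_nonneg hs (by linarith : (0:ℝ) ≤ 3*π-8),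
      mul_nonneg (mul_nonneg (by linarith : (0:ℝ) ≤ π-2) hx.1.le) hcnn]

lemma g3_pattern : ∃ c ∈ Icc (0:ℝ) (π/2),
    (∀ x ∈ Icc (0:ℝ) c, 0 ≤ g3 x) ∧ (∀ x ∈ Ioc c (π/2), g3 x ≤ 0) := by
  apply step g3 g4 hd3 g4_pattern
  · simp [g3]
    nlinarith [Real.pi_gt_d6]
  · simp [g3]
    nlinarith [Real.pi_gt_d6]

lemma g2_pattern : ∃ c ∈ Icc (0:ℝ) (π/2),
    (∀ x ∈ Icc (0:ℝ) c, 0 ≤ g2 x) ∧ (∀ x ∈ Ioc c (π/2), g2 x ≤ 0) := by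
  apply step g2 g3 hd2 g3_pattern
  · simp [g2]
  · simp [g2]
    nlinarith [Real.pi_lt_d2]

lemma g1_pattern : ∃ c ∈ Icc (0:ℝ) (π/2),
    (∀ x ∈ Icc (0:ℝ) c, 0 ≤ g1 x) ∧ (∀ x ∈ Ioc c (π/2), g1 x ≤ 0) := by
  apply step g1 g2 hd1 g2_pattern
  · simp [g1]
  · simp [g1]
    nlinarith [Real.pi_lt_d2, Real.pi_gt_d6]

lemma g0_nonneg : ∀ x ∈ Icc (0:ℝ) (π/2), 0 ≤ g0 x := by
  apply bump g0 g1 hd0 g1_pattern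
  · simp [g0]
  · simp [g0]
    linarith

theorem improved_fink_inequality (x : ℝ) (h0 : 0 ≤ x) (h1 : x ≤ 1) :
    Real.arcsin x ≤ π * x / (2 + (π - 2) * Real.sqrt (1 - x ^ 2)) := by
  have hx1 : (-1:ℝ) ≤ x := by linarith
  set θ := Real.arcsin x with hθdef
  have hθ0 : 0 ≤ θ := Real.arcsin_nonneg.2 h0
  have hθ1 : θ ≤ π/2 := Real.arcsin_le_pi_div_two x
  have hsin : Real.sin θ = x := Real.sin_arcsin hx1 h1
  have hcos : Real.cos θ = Real.sqrt (1 - x^2) := Real.cos_arcsin x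
  have hg := g0_nonneg θ ⟨hθ0, hθ1⟩
  have hsq := Real.sqrt_nonneg (1 - x^2)
  have hD : 0 < 2 + (π-2)*Real.sqrt (1-x^2) := by
    nlinarith [Real.pi_gt_d6]
  rw [le_div_iff₀ hD]
  unfold g0 at hg
  rw [hsin, hcos] at hg
  nlinarith [hg]
end

section
/- For every real number x with 0 < x < 1, one has arcsin x < π·x / (2 + (π − 2)·√(1 − x²)); moreover equality holds in arcsin x ≤ π·x / (2 + (π − 2)·√(1 − x²)) exactly at x = 0 and x = 1. -/
open Real Set

noncomputable def psiF (u : ℝ) : ℝ := (π - 2) * u - Real.tan u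

lemma psi_concave : StrictConcaveOn ℝ (Icc 0 (π/4)) psiF := by
  have hpi : (0:ℝ) < π/4 := by positivity
  apply strictConcaveOn_of_deriv2_neg (convex_Icc _ _)
  · apply ContinuousOn.sub (by fun_prop)
    apply Real.continuousOn_tan.mono
    intro x hx
    simp only [mem_setOf_eq]
    have := Real.cos_pos_of_mem_Ioo (show x ∈ Ioo (-(π/2)) (π/2) by
      constructor <;> [linarith [hx.1, hpi]; linarith [hx.2, Real.pi_pos]])
    exact this.ne'
  · intro x hx
    rw [interior_Icc] at hx
    have hx1 : x ∈ Ioo (-(π/2)) (π/2) := by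
      constructor <;> [linarith [hx.1]; linarith [hx.2, Real.pi_pos]]
    have hcos : 0 < Real.cos x := Real.cos_pos_of_mem_Ioo hx1
    have hsin : 0 < Real.sin x := Real.sin_pos_of_pos_of_lt_pi hx.1 (by linarith [hx.2, Real.pi_pos])
    have hderiv : ∀ u ∈ Ioo (-(π/2)) (π/2), HasDerivAt psiF ((π-2) - 1/Real.cos u^2) u := by
      intro u hu
      have hc := (Real.cos_pos_of_mem_Ioo hu).ne'
      simpa [one_div] using (show HasDerivAt psiF _ u from ((hasDerivAt_id u).const_mul (π-2)).sub (Real.hasDerivAt_tan hc))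
    have heq : deriv psiF =ᶠ[nhds x] (fun u => (π-2) - 1/Real.cos u^2) := by
      filter_upwards [isOpen_Ioo.mem_nhds hx1] with u hu
      exact (hderiv u hu).deriv
    have h2 : HasDerivAt (fun u => (π-2) - 1/Real.cos u^2)
        (-(-(2 * Real.cos x ^ 1 * (-Real.sin x)) / (Real.cos x ^ 2)^2)) x := by
      have := (((Real.hasDerivAt_cos x).pow 2).inv (pow_ne_zero 2 hcos.ne')).const_sub (π-2)
      simpa [one_div] using this
    have : deriv^[2] psiF x = deriv (deriv psiF) x := by
      simp [Function.iterate_succ, Function.iterate_zero, Function.comp]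
    rw [this, heq.deriv_eq, h2.deriv]
    have hval : -(-(2 * Real.cos x ^ 1 * (-Real.sin x)) / (Real.cos x ^ 2)^2)
        = -(2 * Real.sin x * Real.cos x / (Real.cos x ^ 2)^2) := by ring
    rw [hval, neg_lt_zero]
    positivity

lemma psi_chord {a b : ℝ} (ha : 0 < a) (hab : a < b) (hb : b ≤ π/4) :
    (a/b) * psiF b < psiF a := by
  have hb0 : 0 < b := ha.trans hab
  have ht : 0 < a/b := by positivity
  have ht1 : a/b < 1 := (div_lt_one hb0).2 hab
  have h0 : (0:ℝ) ∈ Icc 0 (π/4) := ⟨le_refl 0, by positivity⟩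
  have hbmem : b ∈ Icc 0 (π/4) := ⟨hb0.le, hb⟩
  have key := psi_concave.2 h0 hbmem (ne_of_lt hb0)
    (show 0 < 1 - a/b by linarith) ht (by ring)
  have : psiF 0 = 0 := by simp [psiF]
  have harw : (1 - a/b) • (0:ℝ) + (a/b) • b = a := by
    field_simp
    simp [hb0.ne']
  rw [harw, this] at key
  simpa using key

lemma g_deriv (s : ℝ) : HasDerivAt (fun t => π * Real.sin t - 2*t - (π-2)*(t*Real.cos t))
    (π * Real.cos s - 2 - (π-2)*(1*Real.cos s + s*(-Real.sin s))) s := by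
  exact (((Real.hasDerivAt_sin s).const_mul π).sub
    (((hasDerivAt_id s).const_mul 2).congr_deriv (by ring))).sub
    (((hasDerivAt_id s).mul (Real.hasDerivAt_cos s)).const_mul (π-2))

lemma g_deriv_eq (s : ℝ) (hc : Real.cos (s/2) ≠ 0) :
    π * Real.cos s - 2 - (π-2)*(1*Real.cos s + s*(-Real.sin s)) =
      4 * Real.sin (s/2) * Real.cos (s/2) * psiF (s/2) := by
  have hs : Real.sin s = 2 * Real.sin (s/2) * Real.cos (s/2) := by
    rw [← Real.sin_two_mul]; congr 1; ring
  have hcs : Real.cos s = 2 * Real.cos (s/2)^2 - 1 := by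
    rw [← Real.cos_two_mul]; congr 1; ring
  have htan : Real.tan (s/2) = Real.sin (s/2) / Real.cos (s/2) := Real.tan_eq_sin_div_cos _
  rw [psiF, hs, hcs, htan]
  have hpy := Real.sin_sq_add_cos_sq (s/2)
  field_simp
  linear_combination 8 * hpy

lemma sin_cos_half_pos {s : ℝ} (h0 : 0 < s) (h1 : s < π/2) :
    0 < Real.sin (s/2) ∧ 0 < Real.cos (s/2) := by
  constructor
  · exact Real.sin_pos_of_pos_of_lt_pi (by linarith) (by linarith [Real.pi_pos])
  · exact Real.cos_pos_of_mem_Ioo ⟨by linarith [Real.pi_pos], by linarith [Real.pi_pos]⟩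

lemma g_pos {θ : ℝ} (h0 : 0 < θ) (h1 : θ < π/2) :
    0 < π * Real.sin θ - 2*θ - (π-2)*(θ*Real.cos θ) := by
  set g : ℝ → ℝ := fun t => π * Real.sin t - 2*t - (π-2)*(t*Real.cos t) with hgdef
  have hgc : Continuous g := by fun_prop
  have hDeq : ∀ s, 0 < s → s < π/2 →
      deriv g s = 4 * Real.sin (s/2) * Real.cos (s/2) * psiF (s/2) := by
    intro s hs0 hs1
    rw [(g_deriv s).deriv, g_deriv_eq s (sin_cos_half_pos hs0 hs1).2.ne']
  have hg0 : g 0 = 0 := by simp [hgdef]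
  have hgpi : g (π/2) = 0 := by
    simp [hgdef, Real.sin_pi_div_two, Real.cos_pi_div_two]; ring
  by_cases hψ : 0 < psiF (θ/2)
  · have mono : StrictMonoOn g (Icc 0 θ) := by
      apply strictMonoOn_of_deriv_pos (convex_Icc _ _) hgc.continuousOn
      intro s hs
      rw [interior_Icc] at hs
      obtain ⟨hsl, hsr⟩ := hs
      have hs1 : s < π/2 := lt_trans hsr h1
      obtain ⟨hsn, hcs⟩ := sin_cos_half_pos hsl hs1
      rw [hDeq s hsl hs1]
      have hpsi : 0 < psiF (s/2) := by
        have := psi_chord (show 0 < s/2 by linarith) (show s/2 < θ/2 by linarith)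
          (show θ/2 ≤ π/4 by linarith)
        nlinarith [div_pos (show (0:ℝ) < s/2 by linarith) (show (0:ℝ) < θ/2 by linarith)]
      positivity
    have := mono (Set.left_mem_Icc.2 h0.le) (Set.right_mem_Icc.2 h0.le) h0
    rw [hg0] at this; exact this
  · push_neg at hψ
    have anti : StrictAntiOn g (Icc θ (π/2)) := by
      apply strictAntiOn_of_deriv_neg (convex_Icc _ _) hgc.continuousOn
      intro s hs
      rw [interior_Icc] at hs
      obtain ⟨hsl, hsr⟩ := hs
      have hs0 : 0 < s := lt_trans h0 hsl
      obtain ⟨hsn, hcs⟩ := sin_cos_half_pos hs0 hsr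
      rw [hDeq s hs0 hsr]
      have hpsi : psiF (s/2) < 0 := by
        have hch := psi_chord (show 0 < θ/2 by linarith) (show θ/2 < s/2 by linarith)
          (show s/2 ≤ π/4 by linarith)
        have hq : 0 < (θ/2)/(s/2) := div_pos (by linarith) (by linarith)
        nlinarith
      have : 0 < 4 * Real.sin (s/2) * Real.cos (s/2) := by positivity
      exact mul_neg_of_pos_of_neg this hpsi
    have := anti (Set.left_mem_Icc.2 (by linarith)) (Set.right_mem_Icc.2 (by linarith)) h1
    rw [hgpi] at this; exact this

theorem improved_fink_strict_and_equality_cases :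
    (∀ x : ℝ, 0 < x → x < 1 →
      Real.arcsin x < π * x / (2 + (π - 2) * Real.sqrt (1 - x ^ 2))) ∧
    (∀ x : ℝ, 0 ≤ x → x ≤ 1 →
      (Real.arcsin x = π * x / (2 + (π - 2) * Real.sqrt (1 - x ^ 2)) ↔
        x = 0 ∨ x = 1)) := by
  have strict : ∀ x : ℝ, 0 < x → x < 1 →
      Real.arcsin x < π * x / (2 + (π - 2) * Real.sqrt (1 - x ^ 2)) := by
    intro x hx0 hx1
    have hθ0 : 0 < Real.arcsin x := Real.arcsin_pos.2 hx0
    have hθ1 : Real.arcsin x < π/2 := Real.arcsin_lt_pi_div_two.2 hx1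
    have hsin : Real.sin (Real.arcsin x) = x := Real.sin_arcsin (by linarith) (by linarith)
    have hcos : Real.cos (Real.arcsin x) = Real.sqrt (1 - x^2) := Real.cos_arcsin x
    have hg := g_pos hθ0 hθ1
    rw [hsin, hcos] at hg
    have hden : 0 < 2 + (π - 2) * Real.sqrt (1 - x^2) := by
      have h1 := Real.sqrt_nonneg (1 - x^2)
      nlinarith [Real.pi_gt_three]
    rw [lt_div_iff₀ hden]
    nlinarith [hg]
  refine ⟨strict, fun x hx0 hx1 => ⟨fun heq => ?_, ?_⟩⟩
  · by_contra h
    push_neg at h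
    have h0 : 0 < x := lt_of_le_of_ne hx0 (Ne.symm h.1)
    have h1 : x < 1 := lt_of_le_of_ne hx1 h.2
    exact (strict x h0 h1).ne heq
  · rintro (rfl | rfl)
    · simp
    · rw [Real.arcsin_one]
      norm_num
end

section
/- (Shafer's inequality) For every real number x with 0 ≤ x ≤ 1, one has 3x/(2 + √(1 − x²)) ≤ arcsin x, with equality only for x = 0; i.e. the inequality is strict for 0 < x ≤ 1. -/
open Real

private lemma shafer_key {θ : ℝ} (hθ0 : 0 < θ) (hθ1 : θ ≤ π / 2) :
    3 * Real.sin θ < θ * (2 + Real.cos θ) := by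
  set g : ℝ → ℝ := fun t => t * (2 + Real.cos t) - 3 * Real.sin t with hg
  set g1 : ℝ → ℝ := fun t => 2 - 2 * Real.cos t - t * Real.sin t with hg1
  have hdg : ∀ t : ℝ, HasDerivAt g (g1 t) t := by
    intro t
    have h1 := (hasDerivAt_id t).mul ((hasDerivAt_const t 2).add (Real.hasDerivAt_cos t))
    have h2 : HasDerivAt (fun s : ℝ => 3 * Real.sin s) (3 * Real.cos t) t :=
      (Real.hasDerivAt_sin t).const_mul 3
    have := h1.sub h2
    refine this.congr_deriv ?_
    simp [hg1]; ring
  have hdg1 : ∀ t : ℝ, HasDerivAt g1 (Real.sin t - t * Real.cos t) t := by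
    intro t
    have h1 : HasDerivAt (fun s : ℝ => 2 - 2 * Real.cos s) (2 * Real.sin t) t := by
      have := ((Real.hasDerivAt_cos t).const_mul 2).const_sub 2
      refine this.congr_deriv ?_; ring
    have h2 : HasDerivAt (fun s : ℝ => s * Real.sin s)
        (1 * Real.sin t + t * Real.cos t) t :=
      (hasDerivAt_id t).mul (Real.hasDerivAt_sin t)
    have := h1.sub h2
    refine this.congr_deriv ?_; ring
  have hg2pos : ∀ t ∈ Set.Ioo (0:ℝ) (π/2), 0 < Real.sin t - t * Real.cos t := by
    intro t ht
    have hc : 0 < Real.cos t := Real.cos_pos_of_mem_Ioo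
      ⟨by linarith [ht.1, Real.pi_pos], ht.2⟩
    have htan := Real.lt_tan ht.1 ht.2
    rw [Real.tan_eq_sin_div_cos, lt_div_iff₀ hc] at htan
    linarith
  have hmono1 : StrictMonoOn g1 (Set.Icc 0 (π/2)) := by
    apply strictMonoOn_of_deriv_pos (convex_Icc _ _)
    · exact (continuous_const.sub (continuous_const.mul Real.continuous_cos)).sub
        (continuous_id.mul Real.continuous_sin) |>.continuousOn
    · intro t ht
      rw [interior_Icc] at ht
      rw [(hdg1 t).deriv]
      exact hg2pos t ht
  have hg1pos : ∀ t ∈ Set.Ioc (0:ℝ) (π/2), 0 < g1 t := by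
    intro t ht
    have h0 : g1 0 = 0 := by simp [hg1]
    have := hmono1 (Set.left_mem_Icc.2 (by positivity)) ⟨le_of_lt ht.1, ht.2⟩ ht.1
    rwa [h0] at this
  have hmono : StrictMonoOn g (Set.Icc 0 (π/2)) := by
    apply strictMonoOn_of_deriv_pos (convex_Icc _ _)
    · exact ((continuous_id.mul (continuous_const.add Real.continuous_cos)).sub
        (continuous_const.mul Real.continuous_sin)).continuousOn
    · intro t ht
      rw [interior_Icc] at ht
      rw [(hdg t).deriv]
      exact hg1pos t ⟨ht.1, le_of_lt ht.2⟩
  have h0 : g 0 = 0 := by simp [hg]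
  have := hmono (Set.left_mem_Icc.2 (by positivity)) ⟨le_of_lt hθ0, hθ1⟩ hθ0
  rw [h0] at this
  simp only [hg] at this
  linarith

theorem shafer_inequality (x : ℝ) (h0 : 0 ≤ x) (h1 : x ≤ 1) :
    3 * x / (2 + Real.sqrt (1 - x ^ 2)) ≤ Real.arcsin x ∧
    (0 < x → 3 * x / (2 + Real.sqrt (1 - x ^ 2)) < Real.arcsin x) := by
  have hsqrt : (0:ℝ) ≤ Real.sqrt (1 - x ^ 2) := Real.sqrt_nonneg _
  have hden : (0:ℝ) < 2 + Real.sqrt (1 - x ^ 2) := by linarith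
  have hcos : Real.cos (Real.arcsin x) = Real.sqrt (1 - x ^ 2) := Real.cos_arcsin x
  have hsin : Real.sin (Real.arcsin x) = x := Real.sin_arcsin (by linarith) h1
  rcases eq_or_lt_of_le h0 with h | h
  · subst h
    constructor
    · simp
    · intro hx; exact absurd hx (lt_irrefl 0)
  · have hθ0 : 0 < Real.arcsin x := Real.arcsin_pos.2 h
    have hθ1 : Real.arcsin x ≤ π / 2 := Real.arcsin_le_pi_div_two x
    have key := shafer_key hθ0 hθ1
    rw [hsin, hcos] at key
    have hlt : 3 * x / (2 + Real.sqrt (1 - x ^ 2)) < Real.arcsin x := by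
      rw [div_lt_iff₀ hden]
      linarith
    exact ⟨le_of_lt hlt, fun _ => hlt⟩
end

section
/- (Fink's inequality) For every real number x with 0 ≤ x ≤ 1, one has arcsin x ≤ π·x/(2 + √(1 − x²)). -/
open Real

lemma fink_aux : ∀ θ ∈ Set.Icc (0:ℝ) (π/2), 0 ≤ π * Real.sin θ - θ * (2 + Real.cos θ) := by
  have hpi : (0:ℝ) < π / 2 := by positivity
  set f : ℝ → ℝ := fun θ => π * Real.sin θ - θ * (2 + Real.cos θ) with hf
  set f' : ℝ → ℝ := fun θ => π * Real.cos θ - (2 + Real.cos θ) + θ * Real.sin θ with hf'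
  set f'' : ℝ → ℝ := fun θ => (2 - π) * Real.sin θ + θ * Real.cos θ with hf''
  have hd1 : ∀ θ : ℝ, HasDerivAt f (f' θ) θ := by
    intro θ
    have h1 : HasDerivAt (fun t : ℝ => π * Real.sin t) (π * Real.cos θ) θ :=
      (Real.hasDerivAt_sin θ).const_mul π
    have h2 : HasDerivAt (fun t : ℝ => t * (2 + Real.cos t))
        (1 * (2 + Real.cos θ) + θ * (-Real.sin θ)) θ :=
      (hasDerivAt_id θ).mul ((Real.hasDerivAt_cos θ).const_add 2)
    convert h1.sub h2 using 1
    · rfl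
    · rfl
    · rfl
    simp [hf']; ring
  have hd2 : ∀ θ : ℝ, HasDerivAt f' (f'' θ) θ := by
    intro θ
    have h1 : HasDerivAt (fun t : ℝ => π * Real.cos t) (π * (-Real.sin θ)) θ :=
      (Real.hasDerivAt_cos θ).const_mul π
    have h2 : HasDerivAt (fun t : ℝ => 2 + Real.cos t) (-Real.sin θ) θ :=
      (Real.hasDerivAt_cos θ).const_add 2
    have h3 : HasDerivAt (fun t : ℝ => t * Real.sin t)
        (1 * Real.sin θ + θ * Real.cos θ) θ :=
      (hasDerivAt_id θ).mul (Real.hasDerivAt_sin θ)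
    convert (h1.sub h2).add h3 using 1
    · rfl
    · rfl
    · rfl
    simp [hf'']; ring
  have hconc : ConcaveOn ℝ (Set.Icc (0:ℝ) (π/2)) f := by
    apply concaveOn_of_hasDerivWithinAt2_nonpos (convex_Icc _ _)
    · exact (Continuous.continuousOn (by fun_prop))
    · exact fun x hx => (hd1 x).hasDerivWithinAt
    · exact fun x hx => (hd2 x).hasDerivWithinAt
    · intro x hx
      rw [interior_Icc] at hx
      obtain ⟨hx0, hx2⟩ := hx
      have hcos : 0 < Real.cos x := Real.cos_pos_of_mem_Ioo ⟨by linarith [Real.pi_pos], hx2⟩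
      have htan : x < Real.tan x := Real.lt_tan hx0 hx2
      rw [Real.tan_eq_sin_div_cos, lt_div_iff₀ hcos] at htan
      have hsin : 0 < Real.sin x := Real.sin_pos_of_pos_of_lt_pi hx0 (by linarith [Real.pi_pos])
      have hpi3 : (3:ℝ) < π := by
        have := Real.pi_gt_three
        linarith
      have : x * Real.cos x < (π - 2) * Real.sin x := by
        calc x * Real.cos x < Real.sin x := htan
          _ ≤ (π - 2) * Real.sin x := by nlinarith
      simp only [hf'']
      nlinarith
  intro θ hθ
  obtain ⟨hθ0, hθ2⟩ := hθ
  have hf0 : f 0 = 0 := by simp [hf]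
  have hfpi : f (π/2) = 0 := by simp [hf]
  have ht : ∃ t : ℝ, 0 ≤ t ∧ t ≤ 1 ∧ θ = t * (π/2) := by
    refine ⟨θ / (π/2), by positivity, by rw [div_le_one hpi]; exact hθ2, by field_simp⟩
  obtain ⟨t, ht0, ht1, rfl⟩ := ht
  have := hconc.2 (Set.left_mem_Icc.mpr (le_of_lt hpi))
    (Set.right_mem_Icc.mpr (le_of_lt hpi)) (by linarith : (0:ℝ) ≤ 1 - t) ht0 (by ring)
  simp only [smul_eq_mul, hf0, hfpi, mul_zero, add_zero, zero_add, mul_zero] at this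
  calc (0:ℝ) = (1-t) * f 0 + t * f (π/2) := by rw [hf0, hfpi]; ring
    _ ≤ f ((1-t) • 0 + t • (π/2)) := hconc.2 (Set.left_mem_Icc.mpr (le_of_lt hpi))
        (Set.right_mem_Icc.mpr (le_of_lt hpi)) (by linarith) ht0 (by ring)
    _ = f (t * (π/2)) := by norm_num

theorem fink_inequality (x : ℝ) (h0 : 0 ≤ x) (h1 : x ≤ 1) :
    Real.arcsin x ≤ π * x / (2 + Real.sqrt (1 - x ^ 2)) := by
  set θ := Real.arcsin x with hθ
  have hsin : Real.sin θ = x := Real.sin_arcsin (by linarith) h1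
  have hcos : Real.cos θ = Real.sqrt (1 - x ^ 2) := Real.cos_arcsin x
  have hθmem : θ ∈ Set.Icc (0:ℝ) (π/2) :=
    ⟨Real.arcsin_nonneg.mpr h0, Real.arcsin_le_pi_div_two x⟩
  have key := fink_aux θ hθmem
  rw [hsin, hcos] at key
  have hden : (0:ℝ) < 2 + Real.sqrt (1 - x ^ 2) := by positivity
  rw [le_div_iff₀ hden]
  linarith
end

section
/- (Generalized Shafer lower bound) For every real parameter b ≥ 2 and every real x with 0 ≤ x ≤ 1, one has (b+1)x/(b + √(1−x²)) ≤ arcsin x. -/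
open Real

lemma shafer_key_s10 (b : ℝ) (hb : 2 ≤ b) (θ : ℝ) (h0 : 0 ≤ θ) (h2 : θ ≤ π / 2) :
    (b + 1) * Real.sin θ ≤ θ * (b + Real.cos θ) := by
  set g : ℝ → ℝ := fun t => t * (b + Real.cos t) - (b + 1) * Real.sin t with hg
  have hderiv : ∀ t : ℝ, HasDerivAt g (b - b * Real.cos t - t * Real.sin t) t := by
    intro t
    have h1 : HasDerivAt (fun t : ℝ => t * (b + Real.cos t))
        (1 * (b + Real.cos t) + t * (-Real.sin t)) t :=
      (hasDerivAt_id t).mul ((Real.hasDerivAt_cos t).const_add b)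
    have h2 : HasDerivAt (fun t : ℝ => (b + 1) * Real.sin t)
        ((b + 1) * Real.cos t) t := (Real.hasDerivAt_sin t).const_mul (b + 1)
    have := h1.sub h2
    rw [show (b - b * Real.cos t - t * Real.sin t) = 1 * (b + Real.cos t) + t * (-Real.sin t) - (b + 1) * Real.cos t by ring]
    exact this
  have hmono : MonotoneOn g (Set.Icc 0 (π / 2)) := by
    apply monotoneOn_of_deriv_nonneg (convex_Icc _ _)
      (Continuous.continuousOn (by
        fun_prop))
    · intro t ht
      exact (hderiv t).differentiableAt.differentiableWithinAt
    · intro t ht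
      rw [interior_Icc] at ht
      rw [(hderiv t).deriv]
      have ht0 : 0 < t := ht.1
      have ht2 : t < π / 2 := ht.2
      -- b(1-cos t) ≥ 2(1-cos t) ≥ t sin t
      have hc1 : Real.cos t ≤ 1 := Real.cos_le_one t
      have hs0 : 0 ≤ Real.sin t := Real.sin_nonneg_of_nonneg_of_le_pi ht0.le
        (ht2.le.trans (by linarith [Real.pi_pos]))
      have key : t * Real.sin t ≤ 2 * (1 - Real.cos t) := by
        have htan : t / 2 ≤ Real.tan (t / 2) :=
          (Real.lt_tan (by linarith) (by linarith)).le
        have hcpos : 0 < Real.cos (t / 2) := Real.cos_pos_of_mem_Ioo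
          ⟨by linarith [Real.pi_pos], by linarith⟩
        have hspos : 0 ≤ Real.sin (t / 2) := Real.sin_nonneg_of_nonneg_of_le_pi
          (by linarith) (by linarith [Real.pi_pos])
        rw [Real.tan_eq_sin_div_cos, le_div_iff₀ hcpos] at htan
        have h1 : t * Real.cos (t / 2) ≤ 2 * Real.sin (t / 2) := by linarith
        have hsin : Real.sin t = 2 * Real.sin (t / 2) * Real.cos (t / 2) := by
          rw [← Real.sin_two_mul]; ring_nf
        have hcos : 1 - Real.cos t = 2 * Real.sin (t / 2) ^ 2 := by
          have hd : Real.cos (2 * (t / 2)) = 2 * Real.cos (t / 2) ^ 2 - 1 :=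
            Real.cos_two_mul _
          have h2 : Real.sin (t/2) ^ 2 + Real.cos (t/2) ^ 2 = 1 :=
            Real.sin_sq_add_cos_sq _
          rw [show 2 * (t / 2) = t by ring] at hd
          nlinarith
        rw [hsin, hcos]
        nlinarith
      nlinarith
  have h00 : (0 : ℝ) ∈ Set.Icc 0 (π / 2) := ⟨le_refl _, by linarith [Real.pi_pos]⟩
  have hθ : θ ∈ Set.Icc 0 (π / 2) := ⟨h0, h2⟩
  have := hmono h00 hθ h0
  simp only [hg] at this
  simp at this
  linarith

theorem generalized_shafer_lower_bound (b x : ℝ) (hb : 2 ≤ b)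
    (hx0 : 0 ≤ x) (hx1 : x ≤ 1) :
    (b + 1) * x / (b + Real.sqrt (1 - x ^ 2)) ≤ Real.arcsin x := by
  have hx1' : -1 ≤ x := by linarith
  have hsin : Real.sin (Real.arcsin x) = x := Real.sin_arcsin hx1' hx1
  have hcos : Real.cos (Real.arcsin x) = Real.sqrt (1 - x ^ 2) := Real.cos_arcsin x
  have hθ0 : 0 ≤ Real.arcsin x := Real.arcsin_nonneg.mpr hx0
  have hθ2 : Real.arcsin x ≤ π / 2 := Real.arcsin_le_pi_div_two x
  have hden : 0 < b + Real.sqrt (1 - x ^ 2) := by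
    have := Real.sqrt_nonneg (1 - x ^ 2)
    linarith
  rw [div_le_iff₀ hden]
  have := shafer_key_s10 b hb (Real.arcsin x) hθ0 hθ2
  rw [hsin, hcos] at this
  linarith
end

section
/- For every real parameter b with 2/(π−2) < b < 2, there exists a real number x with 0 < x < 1 such that (b+1)x/(b + √(1−x²)) = arcsin x; that is, the difference function h_b(x) = f_b(x) − arcsin x has a root in the open interval (0,1). -/
open Real

set_option maxHeartbeats 1000000 in
theorem h_has_root_in_open_interval (b : ℝ) (hb₁ : 2 / (π - 2) < b) (hb₂ : b < 2) :
    ∃ x : ℝ, 0 < x ∧ x < 1 ∧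
      (b + 1) * x / (b + Real.sqrt (1 - x ^ 2)) = Real.arcsin x := by
  have hpi3 : (3 : ℝ) < π := Real.pi_gt_three
  have hpi2 : (0 : ℝ) < π - 2 := by linarith
  have hpiu : π < 3.141593 := Real.pi_lt_d6
  have hb74 : 7/4 < b := by
    have h2 : 7/4 < 2 / (π - 2) := by
      rw [lt_div_iff₀ hpi2]; nlinarith
    linarith
  have hbpi : 2 < b * (π - 2) := by
    rw [div_lt_iff₀ hpi2] at hb₁; linarith [hb₁]
  -- the chosen point
  obtain ⟨x₀, hx₀def⟩ : ∃ y : ℝ, y = (2 - b) / 18 := ⟨_, rfl⟩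
  have hx₀pos : 0 < x₀ := by
    rw [hx₀def]; linarith
  have hx₀small : x₀ ≤ 1 / 72 := by
    rw [hx₀def]; linarith
  have hx₀lt1 : x₀ < 1 := by linarith
  -- setup s = sqrt (1 - x₀²)
  obtain ⟨s, hsdef⟩ : ∃ y : ℝ, y = Real.sqrt (1 - x₀ ^ 2) := ⟨_, rfl⟩
  have h1x : (0:ℝ) ≤ 1 - x₀ ^ 2 := by nlinarith
  have hs2 : s ^ 2 = 1 - x₀ ^ 2 := by rw [hsdef]; exact Real.sq_sqrt h1x
  have hs0 : 0 ≤ s := by rw [hsdef]; exact Real.sqrt_nonneg _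
  have hs1 : s ≤ 1 := by
    rw [hsdef]
    exact Real.sqrt_le_one.mpr (by nlinarith)
  have hD : 0 < b + s := by linarith
  obtain ⟨t, htdef⟩ : ∃ y : ℝ, y = (b + 1) * x₀ / (b + s) := ⟨_, rfl⟩
  have ht : t * (b + s) = (b + 1) * x₀ := by
    rw [htdef]; exact div_mul_cancel₀ _ hD.ne'
  have hA : x₀ ≤ t := by
    rw [htdef, le_div_iff₀ hD]; nlinarith
  have hA' : 0 ≤ t - x₀ := by linarith
  have hid : (t - x₀) * ((b + s) * (1 + s)) = x₀ ^ 3 := by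
    linear_combination (1 + s) * ht - x₀ * hs2
  have hM1 : 1 ≤ (b + s) * (1 + s) := by nlinarith
  have hM2 : (b + s) * (1 + s) ≤ 2 * b + 2 := by nlinarith
  have hB : t ≤ x₀ + x₀ ^ 3 := by
    nlinarith [mul_nonneg hA' (sub_nonneg.2 hM1), hid]
  have hC : x₀ ^ 3 / 6 + (2 - b) * x₀ ^ 3 / 18 ≤ t - x₀ := by
    have h1 : x₀ ^ 3 ≤ (t - x₀) * (2 * b + 2) := by
      nlinarith [mul_nonneg hA' (sub_nonneg.2 hM2), hid]
    nlinarith [mul_nonneg hA' (sq_nonneg (b - 2)), h1, mul_le_mul_of_nonneg_left h1 (by linarith : (0:ℝ) ≤ 5 - b)]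
  have ht0 : 0 < t := lt_of_lt_of_le hx₀pos hA
  have ht1 : t ≤ 1 := by nlinarith [hB, hx₀small, hx₀pos]
  have hu : x₀ ^ 2 ≤ 1 / 5184 := by nlinarith [hx₀small, hx₀pos]
  have ht3 : t ^ 3 ≤ x₀ ^ 3 * (1 + 4 * x₀ ^ 2) := by
    have h1 : t ^ 3 ≤ (x₀ + x₀ ^ 3) ^ 3 := pow_le_pow_left₀ ht0.le hB 3
    have hpos : (0:ℝ) ≤ x₀ ^ 5 * (1 - 3 * x₀ ^ 2 - x₀ ^ 4) :=
      mul_nonneg (pow_pos hx₀pos 5).le (by nlinarith [hu, sq_nonneg x₀])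
    nlinarith [h1, hpos]
  have ht4 : t ^ 4 ≤ 2 * x₀ ^ 4 := by
    have h1 : t ^ 4 ≤ (x₀ + x₀ ^ 3) ^ 4 := pow_le_pow_left₀ ht0.le hB 4
    have hpos : (0:ℝ) ≤ x₀ ^ 4 * (2 - (1 + x₀ ^ 2) ^ 4) :=
      mul_nonneg (pow_pos hx₀pos 4).le (by
        have e1 : (1 + x₀ ^ 2) ^ 4 ≤ ((1:ℝ) + 1/5184) ^ 4 :=
          pow_le_pow_left₀ (by positivity) (by linarith) 4
        have e2 : ((1:ℝ) + 1/5184) ^ 4 ≤ 2 := by norm_num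
        linarith)
    nlinarith [h1, hpos]
  have habs : |t| ≤ 1 := by rw [abs_of_pos ht0]; exact ht1
  have hsinb := Real.sin_bound habs
  have hsin_ge : t - t ^ 3 / 6 - t ^ 4 * (5 / 96) ≤ Real.sin t := by
    rw [abs_of_pos ht0] at hsinb
    have := (abs_le.1 hsinb).1
    nlinarith [mul_nonneg (pow_pos ht0 4).le (sub_nonneg.2 ht1), pow_pos ht0 4]
  have hkey : x₀ < Real.sin t := by
    have h2b : 2 - b = 18 * x₀ := by rw [hx₀def]; ring
    have hx3 : 0 < x₀ ^ 3 := by positivity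
    have hfin : x₀ < t - t ^ 3 / 6 - t ^ 4 * (5 / 96) := by
      nlinarith [hC, ht3, ht4, hx₀pos, hx₀small, hx3]
    linarith
  -- so arcsin x₀ < t
  have htpi : t ≤ π / 2 := by nlinarith [ht1, hpi3]
  have harc : Real.arcsin x₀ < t := by
    have hst : Real.sin t ≤ 1 := Real.sin_le_one t
    have h := Real.strictMonoOn_arcsin (a := x₀) (b := Real.sin t)
      ⟨by linarith, by linarith⟩ ⟨by linarith, hst⟩ hkey
    rwa [Real.arcsin_sin (by linarith [Real.pi_pos]) htpi] at h
  -- define f and apply IVT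
  set f : ℝ → ℝ := fun x => (b + 1) * x / (b + Real.sqrt (1 - x ^ 2)) - Real.arcsin x with hfdef
  have hfc : Continuous f := by
    have hden : Continuous fun x : ℝ => b + Real.sqrt (1 - x ^ 2) :=
      continuous_const.add (Real.continuous_sqrt.comp (continuous_const.sub (continuous_pow 2)))
    have hnum : Continuous fun x : ℝ => (b + 1) * x := continuous_const.mul continuous_id
    have hne : ∀ x : ℝ, b + Real.sqrt (1 - x ^ 2) ≠ 0 := fun x => by
      have := Real.sqrt_nonneg (1 - x ^ 2)
      positivity
    exact (hnum.div hden hne).sub Real.continuous_arcsin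
  have hfx₀ : 0 < f x₀ := by
    have hfx : f x₀ = t - Real.arcsin x₀ := by
      rw [hfdef]; simp only []; rw [htdef, hsdef]
    rw [hfx]; linarith
  have hf1 : f 1 < 0 := by
    have h10 : (1:ℝ) - 1 ^ 2 = 0 := by norm_num
    have hfx : f 1 = (b + 1) * 1 / (b + Real.sqrt (1 - 1 ^ 2)) - Real.arcsin 1 := by
      rw [hfdef]
    rw [hfx, h10, Real.sqrt_zero, add_zero, mul_one, Real.arcsin_one]
    rw [sub_neg, div_lt_iff₀ (by linarith : (0:ℝ) < b)]
    nlinarith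
  have hivt := intermediate_value_Ioo' (le_of_lt hx₀lt1) (hfc.continuousOn (s := Set.Icc x₀ 1))
  have h0mem : (0:ℝ) ∈ Set.Ioo (f 1) (f x₀) := ⟨hf1, hfx₀⟩
  obtain ⟨c, hc, hfc0⟩ := hivt h0mem
  refine ⟨c, lt_trans hx₀pos hc.1, hc.2, ?_⟩
  have hceq : (b + 1) * c / (b + Real.sqrt (1 - c ^ 2)) - Real.arcsin c = 0 := hfc0
  linarith
end

section
/- (Optimality of the lower bound within the family) For every real parameter b with 0 < b < 2, there exists a real number x with 0 < x ≤ 1 such that (b+1)x/(b + √(1−x²)) > arcsin x; hence b = 2 gives the greatest lower bound of arcsin among the functions f_b with f_b ≤ arcsin on [0,1]. -/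
open Real

theorem lower_bound_optimality (b : ℝ) (hb₀ : 0 < b) (hb₂ : b < 2) :
    ∃ x : ℝ, 0 < x ∧ x ≤ 1 ∧
      Real.arcsin x < (b + 1) * x / (b + Real.sqrt (1 - x ^ 2)) := by
  set t : ℝ := max (b - 1) 0 with ht
  have ht0 : 0 ≤ t := le_max_right _ _
  have ht1 : t < 1 := by
    apply max_lt (by linarith) one_pos
  have htb : b - 1 ≤ t := le_max_left _ _
  set x₀ : ℝ := Real.sqrt ((1 - t ^ 2) / 2) with hx₀
  have h2pos : (0:ℝ) < (1 - t ^ 2) / 2 := by nlinarith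
  have hx₀pos : 0 < x₀ := Real.sqrt_pos.mpr h2pos
  have hx₀sq : x₀ ^ 2 = (1 - t ^ 2) / 2 := Real.sq_sqrt h2pos.le
  have hx₀lt1 : x₀ < 1 := by
    rw [show (1:ℝ) = Real.sqrt 1 by simp]
    apply Real.sqrt_lt_sqrt h2pos.le
    nlinarith
  set φ : ℝ → ℝ := fun x => Real.arcsin x * (b + Real.sqrt (1 - x ^ 2)) - (b + 1) * x
    with hφ
  -- key facts about s = sqrt(1-x^2) for x in (0, x₀]
  have hskey : ∀ x : ℝ, 0 < x → x ≤ x₀ → t < Real.sqrt (1 - x ^ 2) := by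
    intro x hx hxle
    have hx2 : x ^ 2 ≤ (1 - t ^ 2) / 2 := by
      rw [← hx₀sq]
      exact pow_le_pow_left₀ hx.le hxle 2
    have : t ^ 2 < 1 - x ^ 2 := by nlinarith
    calc t = Real.sqrt (t ^ 2) := by rw [Real.sqrt_sq ht0]
    _ < Real.sqrt (1 - x ^ 2) := Real.sqrt_lt_sqrt (by positivity) this
  -- derivative of φ is negative on (0, x₀)
  have hderiv : ∀ x ∈ Set.Ioo (0:ℝ) x₀, HasDerivAt φ
      ((b * (1 - Real.sqrt (1 - x ^ 2)) - x * Real.arcsin x) / Real.sqrt (1 - x ^ 2)) x := by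
    intro x hx
    obtain ⟨hx0, hxlt⟩ := hx
    have hx1 : x < 1 := hxlt.trans hx₀lt1
    have hs : t < Real.sqrt (1 - x ^ 2) := hskey x hx0 hxlt.le
    have hspos : 0 < Real.sqrt (1 - x ^ 2) := lt_of_le_of_lt ht0 hs
    have h1x2 : (0:ℝ) < 1 - x ^ 2 := by nlinarith
    have harc : HasDerivAt Real.arcsin (1 / Real.sqrt (1 - x ^ 2)) x :=
      Real.hasDerivAt_arcsin (by linarith) (by linarith)
    have hinner : HasDerivAt (fun y : ℝ => 1 - y ^ 2) (-(2 * x)) x := by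
      have := (hasDerivAt_pow 2 x).const_sub 1
      simpa using this
    have hsqrt : HasDerivAt (fun y : ℝ => Real.sqrt (1 - y ^ 2))
        (-(2 * x) / (2 * Real.sqrt (1 - x ^ 2))) x :=
      hinner.sqrt (by positivity)
    have hmul : HasDerivAt (fun y : ℝ => Real.arcsin y * (b + Real.sqrt (1 - y ^ 2)))
        (1 / Real.sqrt (1 - x ^ 2) * (b + Real.sqrt (1 - x ^ 2)) +
          Real.arcsin x * (0 + -(2 * x) / (2 * Real.sqrt (1 - x ^ 2)))) x :=
      harc.mul ((hasDerivAt_const x b).add hsqrt)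
    have hlin : HasDerivAt (fun y : ℝ => (b + 1) * y) (b + 1) x := by
      simpa using (hasDerivAt_id x).const_mul (b + 1)
    have h := hmul.sub hlin
    convert h using 1
    case e'_4 => rfl
    case e'_5 => rfl
    case e'_8 => rfl
    have hsne : Real.sqrt (1 - x ^ 2) ≠ 0 := ne_of_gt hspos
    have hsq : Real.sqrt (1 - x ^ 2) * Real.sqrt (1 - x ^ 2) = 1 - x ^ 2 :=
      Real.mul_self_sqrt h1x2.le
    field_simp
    nlinarith [hsq]
  have hderivneg : ∀ x ∈ Set.Ioo (0:ℝ) x₀,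
      (b * (1 - Real.sqrt (1 - x ^ 2)) - x * Real.arcsin x) / Real.sqrt (1 - x ^ 2) < 0 := by
    intro x hx
    obtain ⟨hx0, hxlt⟩ := hx
    have hs : t < Real.sqrt (1 - x ^ 2) := hskey x hx0 hxlt.le
    have hspos : 0 < Real.sqrt (1 - x ^ 2) := lt_of_le_of_lt ht0 hs
    have hx1 : x < 1 := hxlt.trans hx₀lt1
    have h1x2 : (0:ℝ) < 1 - x ^ 2 := by nlinarith
    have hsq : Real.sqrt (1 - x ^ 2) * Real.sqrt (1 - x ^ 2) = 1 - x ^ 2 :=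
      Real.mul_self_sqrt h1x2.le
    have hsb : b - 1 < Real.sqrt (1 - x ^ 2) := lt_of_le_of_lt htb hs
    have harcge : x ≤ Real.arcsin x := by
      have h1 : Real.sin (Real.arcsin x) = x := Real.sin_arcsin (by linarith) hx1.le
      have h2 : 0 ≤ Real.arcsin x := Real.arcsin_nonneg.mpr hx0.le
      calc x = Real.sin (Real.arcsin x) := h1.symm
      _ ≤ Real.arcsin x := Real.sin_le h2
    have hslt1 : Real.sqrt (1 - x ^ 2) < 1 := by
      nlinarith [hsq, Real.sqrt_nonneg (1 - x ^ 2)]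
    apply div_neg_of_neg_of_pos _ hspos
    -- b(1-s)(1+s) = b x^2 < (1+s) x^2 ≤ (1+s) x arcsin x
    nlinarith [hsq, mul_le_mul_of_nonneg_left harcge hx0.le,
      mul_lt_mul_of_pos_right (show b < 1 + Real.sqrt (1 - x ^ 2) by linarith)
        (show (0:ℝ) < 1 - Real.sqrt (1 - x ^ 2) by linarith)]
  have hcont : ContinuousOn φ (Set.Icc 0 x₀) := by
    apply Continuous.continuousOn
    exact (Real.continuous_arcsin.mul (continuous_const.add
      ((continuous_const.sub (continuous_pow 2)).sqrt))).sub
      (continuous_const.mul continuous_id)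
  have hanti : StrictAntiOn φ (Set.Icc 0 x₀) := by
    apply strictAntiOn_of_deriv_neg (convex_Icc 0 x₀) hcont
    intro x hx
    rw [interior_Icc] at hx
    rw [(hderiv x hx).deriv]
    exact hderivneg x hx
  have hφ0 : φ 0 = 0 := by simp [hφ]
  have hlt : φ x₀ < 0 := by
    have := hanti (Set.left_mem_Icc.mpr hx₀pos.le)
      (Set.right_mem_Icc.mpr hx₀pos.le) hx₀pos
    rwa [hφ0] at this
  refine ⟨x₀, hx₀pos, hx₀lt1.le, ?_⟩
  have hspos : 0 < b + Real.sqrt (1 - x₀ ^ 2) := by positivity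
  rw [lt_div_iff₀ hspos]
  simp only [hφ] at hlt
  linarith
end

section
/- Let b₁ = 2/(π−2) and d₁ = √(−b₁⁴ + 2b₁³ + b₁² − 2b₁). Then 0 < d₁ < 1, and the function h_{b₁}(x) = (b₁+1)x/(b₁ + √(1−x²)) − arcsin x attains its maximum over [0,1] at x = d₁; that is, for all x ∈ [0,1], h_{b₁}(x) ≤ h_{b₁}(d₁). -/
open Real

private lemma hasDerivAt_h_aux (b : ℝ) (hb : 0 < b) {x : ℝ} (hx0 : -1 < x) (hx1 : x < 1) :
    HasDerivAt (fun y : ℝ => (b + 1) * y / (b + Real.sqrt (1 - y ^ 2)) - Real.arcsin y)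
      (((1 - Real.sqrt (1 - x ^ 2)) * (Real.sqrt (1 - x ^ 2) - (b ^ 2 - b - 1))) /
        (Real.sqrt (1 - x ^ 2) * (b + Real.sqrt (1 - x ^ 2)) ^ 2)) x := by
  have hx2 : 0 < 1 - x ^ 2 := by nlinarith
  set u := Real.sqrt (1 - x ^ 2) with hu_def
  have hu : 0 < u := Real.sqrt_pos.2 hx2
  have hu2 : u ^ 2 = 1 - x ^ 2 := Real.sq_sqrt hx2.le
  have hbu : 0 < b + u := by linarith
  have h1 : HasDerivAt (fun y : ℝ => 1 - y ^ 2) (-(2 * x)) x := by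
    simpa using (hasDerivAt_pow 2 x).const_sub 1
  have h2 : HasDerivAt (fun y : ℝ => Real.sqrt (1 - y ^ 2)) (-(2 * x) / (2 * u)) x :=
    h1.sqrt hx2.ne'
  have h3 : HasDerivAt (fun y : ℝ => b + Real.sqrt (1 - y ^ 2)) (-(2 * x) / (2 * u)) x :=
    h2.const_add b
  have h4 : HasDerivAt (fun y : ℝ => (b + 1) * y) (b + 1) x := by
    simpa using (hasDerivAt_id x).const_mul (b + 1)
  have h5 := h4.div h3 hbu.ne'
  have h6 := Real.hasDerivAt_arcsin hx0.ne' hx1.ne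
  have h7 := h5.sub h6
  refine h7.congr_deriv ?_
  have hx2' : x ^ 2 = 1 - u ^ 2 := by linarith
  have e1 : (b + 1) * x * (-(2 * x) / (2 * u)) = -((b + 1) * (1 - u ^ 2)) / u := by
    rw [← hx2']; field_simp
  rw [e1]
  field_simp
  ring

theorem h_attains_max_at_d₁ (b₁ d₁ : ℝ)
    (hb₁ : b₁ = 2 / (π - 2))
    (hd₁ : d₁ = Real.sqrt (-b₁ ^ 4 + 2 * b₁ ^ 3 + b₁ ^ 2 - 2 * b₁)) :
    0 < d₁ ∧ d₁ < 1 ∧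
    ∀ x : ℝ, 0 ≤ x → x ≤ 1 →
      (b₁ + 1) * x / (b₁ + Real.sqrt (1 - x ^ 2)) - Real.arcsin x ≤
        (b₁ + 1) * d₁ / (b₁ + Real.sqrt (1 - d₁ ^ 2)) - Real.arcsin d₁ := by
  have hπl := Real.pi_gt_d6
  have hπu := Real.pi_lt_d6
  have hπ2 : (2 : ℝ) < π := by linarith
  have hb0 : 0 < b₁ := by rw [hb₁]; exact div_pos two_pos (by linarith)
  have hbe : b₁ * (π - 2) = 2 := by
    rw [hb₁, div_mul_cancel₀ _ (by linarith : π - 2 ≠ 0)]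
  have h2 : b₁ ^ 2 * (π - 2) ^ 2 = 4 := by linear_combination (b₁ * (π - 2) + 2) * hbe
  have h3 : b₁ * (π - 2) ^ 2 = 2 * (π - 2) := by linear_combination (π - 2) * hbe
  have hs0 : 0 < b₁ ^ 2 - b₁ - 1 := by
    nlinarith [h2, h3, mul_pos (sub_pos.2 hπ2) (sub_pos.2 hπ2)]
  have hblt : b₁ < 2 := by
    rw [hb₁, div_lt_iff₀ (by linarith)]; linarith
  have hs1 : b₁ ^ 2 - b₁ - 1 < 1 := by nlinarith
  clear hbe h2 h3 hπl hπu hπ2 hb₁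
  have harg : -b₁ ^ 4 + 2 * b₁ ^ 3 + b₁ ^ 2 - 2 * b₁ = 1 - (b₁ ^ 2 - b₁ - 1) ^ 2 := by ring
  have hargpos : 0 < 1 - (b₁ ^ 2 - b₁ - 1) ^ 2 := by nlinarith
  have hd0 : 0 < d₁ := by rw [hd₁, harg]; exact Real.sqrt_pos.2 hargpos
  have hd2 : d₁ ^ 2 = 1 - (b₁ ^ 2 - b₁ - 1) ^ 2 := by
    rw [hd₁, harg, Real.sq_sqrt hargpos.le]
  have hd1 : d₁ < 1 := by nlinarith
  clear hd₁ harg hargpos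
  set f : ℝ → ℝ := fun y => (b₁ + 1) * y / (b₁ + Real.sqrt (1 - y ^ 2)) - Real.arcsin y with hf
  have hcont : Continuous f := by
    apply Continuous.sub
    · apply Continuous.div (by continuity)
        (continuous_const.add (Real.continuous_sqrt.comp (by continuity)))
      intro y
      have := Real.sqrt_nonneg (1 - y ^ 2)
      intro hcontra
      simp only [Pi.add_apply, Function.comp_apply] at hcontra
      linarith
    · exact Real.continuous_arcsin
  have hderiv : ∀ x : ℝ, -1 < x → x < 1 →
      deriv f x = ((1 - Real.sqrt (1 - x ^ 2)) * (Real.sqrt (1 - x ^ 2) - (b₁ ^ 2 - b₁ - 1))) /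
        (Real.sqrt (1 - x ^ 2) * (b₁ + Real.sqrt (1 - x ^ 2)) ^ 2) := fun x h1 h2 =>
    (hasDerivAt_h_aux b₁ hb0 h1 h2).deriv
  have hmono : StrictMonoOn f (Set.Icc 0 d₁) := by
    apply strictMonoOn_of_deriv_pos (convex_Icc 0 d₁) hcont.continuousOn
    intro x hx
    rw [interior_Icc] at hx
    obtain ⟨hxa, hxb⟩ := hx
    have hx1 : x < 1 := lt_trans hxb hd1
    have hx2 : 0 < 1 - x ^ 2 := by nlinarith
    have hu : 0 < Real.sqrt (1 - x ^ 2) := Real.sqrt_pos.2 hx2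
    have hu2 : Real.sqrt (1 - x ^ 2) ^ 2 = 1 - x ^ 2 := Real.sq_sqrt hx2.le
    have hult : Real.sqrt (1 - x ^ 2) < 1 := by nlinarith [hu.le]
    have hugt : b₁ ^ 2 - b₁ - 1 < Real.sqrt (1 - x ^ 2) := by nlinarith [hu.le]
    rw [hderiv x (by linarith) hx1]
    apply div_pos (mul_pos (by linarith) (by linarith))
    exact mul_pos hu (pow_pos (by linarith) 2)
  have hanti : StrictAntiOn f (Set.Icc d₁ 1) := by
    apply strictAntiOn_of_deriv_neg (convex_Icc d₁ 1) hcont.continuousOn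
    intro x hx
    rw [interior_Icc] at hx
    obtain ⟨hxa, hxb⟩ := hx
    have hx0 : 0 < x := lt_trans hd0 hxa
    have hx2 : 0 < 1 - x ^ 2 := by nlinarith
    have hu : 0 < Real.sqrt (1 - x ^ 2) := Real.sqrt_pos.2 hx2
    have hu2 : Real.sqrt (1 - x ^ 2) ^ 2 = 1 - x ^ 2 := Real.sq_sqrt hx2.le
    have hult : Real.sqrt (1 - x ^ 2) < b₁ ^ 2 - b₁ - 1 := by nlinarith [hu.le]
    rw [hderiv x (by linarith) hxb]
    apply div_neg_of_neg_of_pos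
    · exact mul_neg_of_pos_of_neg (by linarith) (by linarith)
    · exact mul_pos hu (pow_pos (by linarith) 2)
  refine ⟨hd0, hd1, fun x hx0 hx1 => ?_⟩
  show f x ≤ f d₁
  rcases le_total x d₁ with hle | hle
  · exact hmono.monotoneOn ⟨hx0, hle⟩ ⟨hd0.le, le_refl d₁⟩ hle
  · exact hanti.antitoneOn ⟨le_refl d₁, hd1.le⟩ ⟨hle, hx1⟩ hle
end
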